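/- Let p be an odd prime, d an odd positive integer coprime to p, and f : ℤ_p → ℂ_p continuous. Then the fermionic integral over X = lim← ℤ/dp^Nℤ agrees with that over ℤ_p: lim_{N→∞} ∑_{x=0}^{dp^N−1} f(x)(−1)^x = lim_{N→∞} ∑_{x=0}^{p^N−1} f(x)(−1)^x. -/

import Mathlib

lemma sum_range_mul_split {M : Type*} [AddCommMonoid M] (g : ℕ → M) (d m : ℕ) :
    ∑ x ∈ Finset.range (d * m), g x
      = ∑ k ∈ Finset.range d, ∑ a ∈ Finset.range m, g (m * k + a) := by
  induction d with
  | zero => simp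
  | succ n ih =>
    rw [Finset.sum_range_succ, ← ih, Nat.succ_mul, Finset.sum_range_add]
    simp [Nat.mul_comm]

/-- for an odd prime p, odd d coprime to p, the fermionic integral
over X = lim← ℤ/dp^Nℤ agrees with that over ℤ_p.  Since ℂ_p is not available in
Mathlib, the codomain is a complete nonarchimedean nontrivially normed field `K`. -/
theorem fermionic_integral_X_eq (p : ℕ) [Fact p.Prime] (hp : Odd p)
    (d : ℕ) (hd0 : 0 < d) (hd : Odd d) (hdp : Nat.Coprime d p)
    (K : Type*) [NontriviallyNormedField K] [CompleteSpace K] [IsUltrametricDist K]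
    (f : ℤ_[p] → K) (hf : Continuous f) (I : K)
    (hI : Filter.Tendsto
      (fun N : ℕ => ∑ x ∈ Finset.range (p ^ N), (-1 : K) ^ x * f (x : ℤ_[p]))
      Filter.atTop (nhds I)) :
    Filter.Tendsto
      (fun N : ℕ => ∑ x ∈ Finset.range (d * p ^ N), (-1 : K) ^ x * f (x : ℤ_[p]))
      Filter.atTop (nhds I) := by
  have hu : UniformContinuous f := CompactSpace.uniformContinuous_of_continuous hf
  rw [Metric.tendsto_atTop] at hI ⊢
  intro ε hε
  obtain ⟨δ, hδ, hδ'⟩ := Metric.uniformContinuous_iff.mp hu (ε/2) (by positivity)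
  have hplt : ‖(p : ℤ_[p])‖ < 1 := by
    rw [PadicInt.norm_p]
    have h1 : (1 : ℝ) < (p : ℝ) := by
      exact_mod_cast (Fact.out : p.Prime).one_lt
    rw [inv_lt_one_iff₀]; right; exact h1
  have hpow : Filter.Tendsto (fun N : ℕ => ‖(p : ℤ_[p])‖ ^ N) Filter.atTop (nhds 0) :=
    tendsto_pow_atTop_nhds_zero_of_lt_one (norm_nonneg _) hplt
  obtain ⟨N1, hN1⟩ := (Metric.tendsto_atTop.mp hpow) δ hδ
  obtain ⟨N2, hN2⟩ := hI (ε/2) (by positivity)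
  refine ⟨max N1 N2, fun N hN => ?_⟩
  set S := ∑ x ∈ Finset.range (p ^ N), (-1 : K) ^ x * f (x : ℤ_[p]) with hSdef
  set A : ℕ → K := fun k => ∑ a ∈ Finset.range (p ^ N),
      (-1 : K) ^ a * f ((p ^ N * k + a : ℕ) : ℤ_[p]) with hAdef
  have hone : ∑ k ∈ Finset.range d, (-1 : K) ^ k = 1 := by
    rw [neg_one_geom_sum, if_neg (Nat.not_even_iff_odd.mpr hd)]
  have hsplit : ∑ x ∈ Finset.range (d * p ^ N), (-1 : K) ^ x * f (x : ℤ_[p])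
      = ∑ k ∈ Finset.range d, (-1 : K) ^ k * A k := by
    rw [sum_range_mul_split (fun x => (-1 : K) ^ x * f (x : ℤ_[p])) d (p ^ N)]
    refine Finset.sum_congr rfl fun k _ => ?_
    rw [hAdef, Finset.mul_sum]
    refine Finset.sum_congr rfl fun a _ => ?_
    have : ((-1 : K)) ^ (p ^ N * k + a) = (-1 : K) ^ k * (-1 : K) ^ a := by
      rw [pow_add, pow_mul, Odd.neg_one_pow (hp.pow)]
    rw [this]; ring
  have hnormdist : ∀ N', N1 ≤ N' → ‖(p : ℤ_[p])‖ ^ N' < δ := by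
    intro N' hN'
    have := hN1 N' hN'
    rwa [Real.dist_eq, sub_zero, abs_of_nonneg (by positivity)] at this
  have key : ‖(∑ x ∈ Finset.range (d * p ^ N), (-1 : K) ^ x * f (x : ℤ_[p])) - S‖
      ≤ ε / 2 := by
    have hTS : (∑ x ∈ Finset.range (d * p ^ N), (-1 : K) ^ x * f (x : ℤ_[p])) - S
        = ∑ k ∈ Finset.range d, (-1 : K) ^ k * (A k - S) := by
      simp only [mul_sub, Finset.sum_sub_distrib, ← Finset.sum_mul, hone, one_mul, hsplit]
    rw [hTS]
    refine IsUltrametricDist.norm_sum_le_of_forall_le_of_nonneg (by positivity)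
      fun k _ => ?_
    have hnk : ‖(-1 : K) ^ k * (A k - S)‖ = ‖A k - S‖ := by
      rw [norm_mul, norm_pow, norm_neg, norm_one, one_pow, one_mul]
    rw [hnk]
    have hAS : A k - S = ∑ a ∈ Finset.range (p ^ N),
        (-1 : K) ^ a * (f ((p ^ N * k + a : ℕ) : ℤ_[p]) - f ((a : ℕ) : ℤ_[p])) := by
      simp only [hAdef, hSdef, mul_sub, Finset.sum_sub_distrib]
    rw [hAS]
    refine IsUltrametricDist.norm_sum_le_of_forall_le_of_nonneg (by positivity)
      fun a _ => ?_
    have hna : ‖(-1 : K) ^ a * (f ((p ^ N * k + a : ℕ) : ℤ_[p]) - f ((a : ℕ) : ℤ_[p]))‖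
        = ‖f ((p ^ N * k + a : ℕ) : ℤ_[p]) - f ((a : ℕ) : ℤ_[p])‖ := by
      rw [norm_mul, norm_pow, norm_neg, norm_one, one_pow, one_mul]
    rw [hna, ← dist_eq_norm]
    refine le_of_lt (hδ' ?_)
    rw [dist_eq_norm]
    have hcast : (((p ^ N * k + a : ℕ) : ℤ_[p])) - ((a : ℕ) : ℤ_[p])
        = (p : ℤ_[p]) ^ N * (k : ℤ_[p]) := by push_cast; ring
    rw [hcast]
    calc ‖(p : ℤ_[p]) ^ N * (k : ℤ_[p])‖ ≤ ‖(p : ℤ_[p]) ^ N‖ * ‖(k : ℤ_[p])‖ :=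
          norm_mul_le _ _
      _ ≤ ‖(p : ℤ_[p])‖ ^ N * 1 := by
          rw [norm_pow]
          exact mul_le_mul_of_nonneg_left (PadicInt.norm_le_one _) (by positivity)
      _ = ‖(p : ℤ_[p])‖ ^ N := mul_one _
      _ < δ := hnormdist N (le_trans (le_max_left _ _) hN)
  have hSI : dist S I < ε / 2 := hN2 N (le_trans (le_max_right _ _) hN)
  calc dist (∑ x ∈ Finset.range (d * p ^ N), (-1 : K) ^ x * f (x : ℤ_[p])) I
      ≤ dist (∑ x ∈ Finset.range (d * p ^ N), (-1 : K) ^ x * f (x : ℤ_[p])) S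
        + dist S I := dist_triangle _ _ _
    _ < ε / 2 + ε / 2 := by
        rw [dist_eq_norm]
        exact add_lt_add_of_le_of_lt key hSI
    _ = ε := by ring
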